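/- Let 1 < p < 2 and m ≥ 1. For every ε > 0 there exists a constant C = C(p, ε) > 0 such that for all a, b ∈ ℝ^m one has (1 + |a + b|²)^{p/2} ≤ C(p, ε) · (1 + |a|²)^{p/2} + (1 + ε) |b|^p. -/

import Mathlib

open Real

lemma aux_convex (p : ℝ) (hp : 1 ≤ p) (θ : ℝ) (hθ0 : 0 < θ) (hθ1 : θ < 1)
    (s t : ℝ) (hs : 0 ≤ s) (ht : 0 ≤ t) :
    (s + t) ^ p ≤ θ ^ (1 - p) * s ^ p + (1 - θ) ^ (1 - p) * t ^ p := by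
  have h1θ : (0:ℝ) < 1 - θ := by linarith
  have hc := (convexOn_rpow hp).2 (x := s / θ) (y := t / (1 - θ))
    (by exact Set.mem_Ici.2 (by positivity)) (Set.mem_Ici.2 (by positivity))
    hθ0.le h1θ.le (by ring)
  simp only [smul_eq_mul] at hc
  rw [mul_div_cancel₀ _ hθ0.ne', mul_div_cancel₀ _ h1θ.ne'] at hc
  have e1 : θ * (s / θ) ^ p = θ ^ (1 - p) * s ^ p := by
    rw [Real.div_rpow hs hθ0.le, Real.rpow_sub hθ0, Real.rpow_one]
    field_simp
  have e2 : (1 - θ) * (t / (1 - θ)) ^ p = (1 - θ) ^ (1 - p) * t ^ p := by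
    rw [Real.div_rpow ht h1θ.le, Real.rpow_sub h1θ, Real.rpow_one]
    field_simp
  rw [e1, e2] at hc
  exact hc

theorem stmt_15 (p : ℝ) (hp1 : 1 < p) (hp2 : p < 2) (m : ℕ) (hm : 1 ≤ m)
    (ε : ℝ) (hε : 0 < ε) :
    ∃ C : ℝ, 0 < C ∧ ∀ a b : EuclideanSpace ℝ (Fin m),
      (1 + ‖a + b‖ ^ 2) ^ (p / 2) ≤ C * (1 + ‖a‖ ^ 2) ^ (p / 2) + (1 + ε) * ‖b‖ ^ p := by
  have hε1 : (1:ℝ) < 1 + ε := by linarith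
  have hpm : 0 < p - 1 := by linarith
  set r : ℝ := (1 + ε) ^ (-(p - 1)⁻¹) with hr
  have hr0 : 0 < r := Real.rpow_pos_of_pos (by linarith) _
  have hr1 : r < 1 :=
    Real.rpow_lt_one_of_one_lt_of_neg hε1 (by have := inv_pos.2 hpm; linarith)
  set θ : ℝ := 1 - r with hθ
  have hθ0 : 0 < θ := by simp [hθ]; linarith
  have hθ1 : θ < 1 := by simp [hθ]; linarith
  have hrp : (1 - θ) ^ (1 - p) = 1 + ε := by
    have : (1 - θ) = r := by simp [hθ]
    rw [this, hr, ← Real.rpow_mul (by linarith : (0:ℝ) ≤ 1 + ε),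
      show (-(p - 1)⁻¹) * (1 - p) = 1 by field_simp; ring, Real.rpow_one]
  refine ⟨θ ^ (1 - p), Real.rpow_pos_of_pos hθ0 _, fun a b => ?_⟩
  set x := ‖a‖ with hx
  set y := ‖b‖ with hy
  have hx0 : 0 ≤ x := norm_nonneg a
  have hy0 : 0 ≤ y := norm_nonneg b
  set S : ℝ := Real.sqrt (1 + x ^ 2) + y with hS
  have hsq0 : 0 ≤ Real.sqrt (1 + x ^ 2) := Real.sqrt_nonneg _
  have hS0 : 0 ≤ S := by positivity
  have hxle : x ≤ Real.sqrt (1 + x ^ 2) := by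
    have : x ^ 2 ≤ 1 + x ^ 2 := by linarith
    calc x ≤ |x| := le_abs_self x
    _ = Real.sqrt (x ^ 2) := (Real.sqrt_sq_eq_abs x).symm
    _ ≤ _ := Real.sqrt_le_sqrt this
  have hsqsq : Real.sqrt (1 + x ^ 2) ^ 2 = 1 + x ^ 2 :=
    Real.sq_sqrt (by positivity)
  have step1 : 1 + ‖a + b‖ ^ 2 ≤ S ^ 2 := by
    have htri : ‖a + b‖ ≤ x + y := norm_add_le a b
    have h2 : ‖a + b‖ ^ 2 ≤ (x + y) ^ 2 := by
      apply sq_le_sq' <;> nlinarith [norm_nonneg (a + b)]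
    have h3 : (x + y) ^ 2 ≤ x ^ 2 + 2 * Real.sqrt (1 + x ^ 2) * y + y ^ 2 := by
      nlinarith
    rw [hS]; nlinarith
  have hp2' : (0:ℝ) ≤ p / 2 := by linarith
  have step2 : (1 + ‖a + b‖ ^ 2) ^ (p / 2) ≤ S ^ p := by
    have h1 : (0:ℝ) ≤ 1 + ‖a + b‖ ^ 2 := by positivity
    calc (1 + ‖a + b‖ ^ 2) ^ (p / 2) ≤ (S ^ 2) ^ (p / 2) :=
          Real.rpow_le_rpow h1 step1 hp2'
      _ = S ^ p := by
          rw [← Real.rpow_natCast S 2, ← Real.rpow_mul hS0,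
            show (2:ℕ) * (p / 2) = p by push_cast; ring]
  have key := aux_convex p hp1.le θ hθ0 hθ1 (Real.sqrt (1 + x ^ 2)) y hsq0 hy0
  rw [hrp] at key
  have hsqp : Real.sqrt (1 + x ^ 2) ^ p = (1 + x ^ 2) ^ (p / 2) := by
    rw [Real.sqrt_eq_rpow, ← Real.rpow_mul (by positivity),
      show 1 / 2 * p = p / 2 by ring]
  rw [hsqp] at key
  calc (1 + ‖a + b‖ ^ 2) ^ (p / 2) ≤ S ^ p := step2
    _ ≤ _ := key
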